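/- Let 0 < p < q < ∞ and let ω be a radial weight. Define f(re^{iθ}) = (1−r)^{1/p} / (|θ|^{1/q} ω(r)^{1/p}) when ω(r)θ ≠ 0 (with θ ∈ (−π,π]) and f = 0 otherwise. Then f belongs to the tent space T^q_p(ω) but not to the mixed norm space L^q_p(ω), i.e., ‖f‖_{T^q_p(ω)} < ∞ while ‖f‖_{L^q_p(ω)} = ∞. -/

import Mathlib

open MeasureTheory Set
open scoped ENNReal NNReal

/-- Distance between arguments modulo 2π. -/
noncomputable def argDist (z w : ℂ) : ℝ :=
  |Real.Angle.toReal ((Complex.arg z - Complex.arg w : ℝ) : Real.Angle)|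

/-- The non-tangential approach region (cone) with vertex `ξ` and opening `M`. -/
noncomputable def cone (M : ℝ) (ξ : ℂ) : Set ℂ :=
  {z : ℂ | ‖z‖ < 1 ∧ argDist z ξ < M * (‖ξ‖ - ‖z‖)}

/-- The mixed norm `L^q_p(ω)` quasinorm. -/
noncomputable def Lqp (p q : ℝ) (ω : ℝ → ℝ) (f : ℂ → ℂ) : ℝ≥0∞ :=
  (ENNReal.ofReal (1 / (2 * Real.pi)) *
    ∫⁻ θ in Set.Ico (0 : ℝ) (2 * Real.pi),
      (∫⁻ r in Set.Ico (0 : ℝ) 1,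
        ((‖f ((r : ℂ) * Complex.exp ((θ : ℂ) * Complex.I))‖₊ : ℝ≥0∞)) ^ p *
          ENNReal.ofReal (ω r * r)) ^ (q / p)) ^ (1 / q)

/-- The tent space `T^q_p(ω)` quasinorm. -/
noncomputable def Tqp (p q : ℝ) (ω : ℝ → ℝ) (f : ℂ → ℂ) : ℝ≥0∞ :=
  (ENNReal.ofReal (1 / (2 * Real.pi)) *
    ∫⁻ θ in Set.Ico (0 : ℝ) (2 * Real.pi),
      (∫⁻ z in cone 1 (Complex.exp ((θ : ℂ) * Complex.I)),
        ((‖f z‖₊ : ℝ≥0∞)) ^ p *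
          ENNReal.ofReal (ω (‖z‖) / (1 - ‖z‖))) ^ (q / p)) ^ (1 / q)

/-- The test function `f(re^{iθ}) = (1-r)^{1/p} θ^{-1/q} ω(r)^{-1/p}`. -/
noncomputable def fTest (p q : ℝ) (ω : ℝ → ℝ) (z : ℂ) : ℂ :=
  if ω (‖z‖) = 0 ∨ Complex.arg z = 0 then 0
  else (((1 - ‖z‖) ^ (1 / p) /
    (|Complex.arg z| ^ (1 / q) * (ω (‖z‖)) ^ (1 / p)) : ℝ) : ℂ)

lemma key_real {p q t x w : ℝ} (hp : 0 < p)
    (ht : 0 ≤ t) (hx : 0 < x) (hw : 0 < w) :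
    (t ^ (1/p) / (x ^ (1/q) * w ^ (1/p))) ^ p * w = t * x ^ (-(p/q)) := by
  have h1 : (t ^ (1/p)) ^ p = t := by
    rw [← Real.rpow_mul ht, one_div_mul_cancel hp.ne', Real.rpow_one]
  have h2 : (x ^ (1/q)) ^ p = x ^ (p/q) := by
    rw [← Real.rpow_mul hx.le]; congr 1; ring
  have h3 : (w ^ (1/p)) ^ p = w := by
    rw [← Real.rpow_mul hw.le, one_div_mul_cancel hp.ne', Real.rpow_one]
  have hxpq : (0:ℝ) < x ^ (p/q) := Real.rpow_pos_of_pos hx _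
  rw [Real.div_rpow (Real.rpow_nonneg ht _) (by positivity),
      Real.mul_rpow (Real.rpow_nonneg hx.le _) (Real.rpow_nonneg hw.le _),
      h1, h2, h3, Real.rpow_neg hx.le]
  field_simp

lemma nnnorm_fTest {p q : ℝ} {ω : ℝ → ℝ} {z : ℂ}
    (h1 : ω (‖z‖) ≠ 0) (h2 : Complex.arg z ≠ 0) (ht : 0 ≤ 1 - ‖z‖)
    (hω0 : 0 ≤ ω (‖z‖)) :
    (‖fTest p q ω z‖₊ : ℝ≥0∞) = ENNReal.ofReal ((1 - ‖z‖) ^ (1 / p) /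
      (|Complex.arg z| ^ (1 / q) * (ω (‖z‖)) ^ (1 / p))) := by
  rw [fTest, if_neg (by tauto)]
  have hv : 0 ≤ (1 - ‖z‖) ^ (1 / p) /
      (|Complex.arg z| ^ (1 / q) * (ω (‖z‖)) ^ (1 / p)) := by
    apply div_nonneg (Real.rpow_nonneg ht _)
    exact mul_nonneg (Real.rpow_nonneg (abs_nonneg _) _) (Real.rpow_nonneg hω0 _)
  rw [← enorm_eq_nnnorm, ← ofReal_norm, Complex.norm_real, Real.norm_eq_abs, abs_of_nonneg hv]

lemma tent_ptwise {p q : ℝ} (hp : 0 < p) (hq : 0 < q) {ω : ℝ → ℝ} (hnn : ∀ r, 0 ≤ ω r) (z : ℂ) :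
    (‖fTest p q ω z‖₊ : ℝ≥0∞) ^ p * ENNReal.ofReal (ω (‖z‖) / (1 - ‖z‖)) ≤
      ENNReal.ofReal (|Complex.arg z| ^ (-(p/q))) := by
  by_cases hcond : ω (‖z‖) = 0 ∨ Complex.arg z = 0
  · have : fTest p q ω z = 0 := by rw [fTest, if_pos hcond]
    simp [this, ENNReal.zero_rpow_of_pos hp]
  · push_neg at hcond
    obtain ⟨hω, harg⟩ := hcond
    have hωpos : 0 < ω (‖z‖) := (hnn _).lt_of_ne (Ne.symm hω)
    have hargpos : 0 < |Complex.arg z| := abs_pos.2 harg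
    rcases le_or_gt (1 - ‖z‖) 0 with hr | hr
    · have : ENNReal.ofReal (ω (‖z‖) / (1 - ‖z‖)) = 0 := by
        rcases eq_or_lt_of_le hr with h | h
        · rw [h, div_zero, ENNReal.ofReal_zero]
        · exact ENNReal.ofReal_eq_zero.2 (le_of_lt (div_neg_of_pos_of_neg hωpos h))
      rw [this, mul_zero]
      exact zero_le
    · rw [nnnorm_fTest hω harg hr.le (hnn _),
        ENNReal.ofReal_rpow_of_nonneg (by positivity) hp.le,
        ← ENNReal.ofReal_mul (by positivity)]
      apply ENNReal.ofReal_le_ofReal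
      have key := key_real (q := q) (t := 1 - ‖z‖) (x := |Complex.arg z|)
        (w := ω (‖z‖)) hp hr.le hargpos hωpos
      rw [le_iff_lt_or_eq]; right
      have h2 : ((1 - ‖z‖) ^ (1 / p) / (|z.arg| ^ (1 / q) * ω (‖z‖) ^ (1 / p))) ^ p *
          (ω (‖z‖) / (1 - ‖z‖)) =
          (((1 - ‖z‖) ^ (1 / p) / (|z.arg| ^ (1 / q) * ω (‖z‖) ^ (1 / p))) ^ p *
            ω (‖z‖)) / (1 - ‖z‖) := by ring
      rw [h2, key, mul_comm, mul_div_assoc, div_self hr.ne', mul_one]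

lemma ball_lintegral_lt_top {a : ℝ} (ha0 : 0 < a) (ha1 : a < 1) :
    ∫⁻ z in Metric.ball (0:ℂ) 1, ENNReal.ofReal (|Complex.arg z| ^ (-a)) < ⊤ := by
  set F : ℝ → ℝ≥0∞ := fun y => ENNReal.ofReal (|y| ^ (-a)) with hF
  have hFmeas : Measurable F := by fun_prop
  have P1 : ∫⁻ y in Icc (0:ℝ) 1, F y < ⊤ := by
    rw [← setLIntegral_congr (Ioo_ae_eq_Icc (μ := volume) (a := (0:ℝ)) (b := 1))]
    have hInt : IntegrableOn (fun y : ℝ => y ^ (-a)) (Ioo (0:ℝ) 1) :=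
      (intervalIntegral.integrableOn_Ioo_rpow_iff zero_lt_one).2 (by linarith)
    have heq : ∫⁻ y in Ioo (0:ℝ) 1, F y
        = ∫⁻ y in Ioo (0:ℝ) 1, (‖(fun y : ℝ => y ^ (-a)) y‖₊ : ℝ≥0∞) := by
      apply setLIntegral_congr_fun measurableSet_Ioo
      intro y hy
      rw [hF]
      simp only
      rw [abs_of_pos hy.1, ← Real.enorm_eq_ofReal (Real.rpow_nonneg hy.1.le _), enorm_eq_nnnorm]
    rw [heq]
    exact hInt.2
  have P0 : ∫⁻ y in Icc (-1:ℝ) 0, F y < ⊤ := by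
    have hpre : Icc (-1:ℝ) 0 = (fun y : ℝ => -y) ⁻¹' (Icc (0:ℝ) 1) := by
      ext y; simp only [mem_Icc, mem_preimage]
      constructor <;> intro h <;> constructor <;> linarith [h.1, h.2]
    have hemb : MeasurableEmbedding (fun y : ℝ => -y) :=
      (Homeomorph.neg ℝ).measurableEmbedding
    have hkey := (Measure.measurePreserving_neg (volume : Measure ℝ)).setLIntegral_comp_preimage_emb
      hemb F (Icc 0 1)
    rw [hpre]
    calc ∫⁻ y in (fun y : ℝ => -y) ⁻¹' (Icc (0:ℝ) 1), F y
        = ∫⁻ y in (fun y : ℝ => -y) ⁻¹' (Icc (0:ℝ) 1), F (-y) := by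
          apply lintegral_congr; intro y; rw [hF]; simp [abs_neg]
      _ = ∫⁻ y in Icc (0:ℝ) 1, F y := hkey
      _ < ⊤ := P1
  have C_lt : ∫⁻ y in Icc (-1:ℝ) 1, F y < ⊤ := by
    have hU : Icc (-1:ℝ) 1 = Icc (-1:ℝ) 0 ∪ Icc (0:ℝ) 1 :=
      (Icc_union_Icc_eq_Icc (by norm_num) (by norm_num)).symm
    rw [hU]
    exact (lintegral_union_le _ _ _).trans_lt (ENNReal.add_lt_top.2 ⟨P0, P1⟩)
  have hnull : volume {z : ℂ | z.im = 0} = 0 := by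
    have h1 : {z : ℂ | z.im = 0}
        = Complex.measurableEquivRealProd ⁻¹' ((univ : Set ℝ) ×ˢ ({0} : Set ℝ)) := by
      ext z; simp [Complex.measurableEquivRealProd_apply, eq_comm]
    rw [h1, Complex.volume_preserving_equiv_real_prod.measure_preimage
      (MeasurableSet.univ.prod (measurableSet_singleton 0)).nullMeasurableSet]
    rw [Measure.volume_eq_prod, Measure.prod_prod]
    simp
  set T : Set (ℝ × ℝ) := Icc (-1:ℝ) 1 ×ˢ Icc (-1:ℝ) 1 with hT
  set S : Set ℂ := Complex.measurableEquivRealProd ⁻¹' T with hS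
  have hSmeas : MeasurableSet S :=
    Complex.measurableEquivRealProd.measurable (measurableSet_Icc.prod measurableSet_Icc)
  have hstep : ∫⁻ z in Metric.ball (0:ℂ) 1, ENNReal.ofReal (|Complex.arg z| ^ (-a)) ≤
      ∫⁻ z in S, F z.im := by
    rw [← lintegral_indicator measurableSet_ball, ← lintegral_indicator hSmeas]
    apply lintegral_mono_ae
    have hae : ∀ᵐ z : ℂ, z.im ≠ 0 := by
      rw [ae_iff]; convert hnull using 2; ext z; simp
    filter_upwards [hae] with z hz
    by_cases hzball : z ∈ Metric.ball (0:ℂ) 1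
    · have habs : ‖z‖ < 1 := by
        simpa [Complex.dist_eq] using hzball
      have hre := Complex.abs_re_le_norm z
      have him' := Complex.abs_im_le_norm z
      have hzS : z ∈ S := by
        rw [hS, hT]
        simp only [mem_preimage, Complex.measurableEquivRealProd_apply, mem_prod, mem_Icc]
        constructor
        · constructor <;> [linarith [neg_abs_le z.re] ; linarith [le_abs_self z.re]]
        · constructor <;> [linarith [neg_abs_le z.im] ; linarith [le_abs_self z.im]]
      rw [indicator_of_mem hzball, indicator_of_mem hzS]
      have him : |z.im| ≤ |z.arg| := by
        have h1 : ‖z‖ * Real.sin z.arg = z.im := Complex.norm_mul_sin_arg z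
        have h2 : |z.im| = ‖z‖ * |Real.sin z.arg| := by
          rw [← h1, abs_mul, abs_of_nonneg (norm_nonneg z)]
        rw [h2]
        calc ‖z‖ * |Real.sin z.arg| ≤ 1 * |z.arg| :=
              mul_le_mul habs.le Real.abs_sin_le_abs (abs_nonneg _) zero_le_one
          _ = |z.arg| := one_mul _
      have himpos : 0 < |z.im| := abs_pos.2 hz
      exact ENNReal.ofReal_le_ofReal (Real.rpow_le_rpow_of_nonpos himpos him (by linarith))
    · rw [indicator_of_notMem hzball]; exact zero_le
  have hSval : ∫⁻ z in S, F z.im = ∫⁻ p in T, F p.2 :=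
    Complex.volume_preserving_equiv_real_prod.setLIntegral_comp_preimage_emb
      Complex.measurableEquivRealProd.measurableEmbedding (fun p => F p.2) T
  have hTval : ∫⁻ p in T, F p.2 < ⊤ := by
    rw [hT, Measure.volume_eq_prod, ← Measure.prod_restrict,
      lintegral_prod (fun p => F p.2) ((hFmeas.comp measurable_snd).aemeasurable)]
    simp only [lintegral_const, Measure.restrict_apply_univ]
    rw [Real.volume_Icc]
    exact ENNReal.mul_lt_top C_lt ENNReal.ofReal_lt_top
  exact hstep.trans_lt (hSval ▸ hTval)

lemma cone_subset_ball (ξ : ℂ) : cone 1 ξ ⊆ Metric.ball (0:ℂ) 1 := fun z hz => by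
  rw [Metric.mem_ball, Complex.dist_eq, sub_zero]
  exact hz.1

lemma inv_lintegral_top : ∫⁻ θ in Ioo (0:ℝ) Real.pi, ENNReal.ofReal θ⁻¹ = ⊤ := by
  by_contra h
  have hlt : ∫⁻ θ in Ioo (0:ℝ) Real.pi, ENNReal.ofReal θ⁻¹ < ⊤ := lt_top_iff_ne_top.2 h
  have h0 : 0 ≤ᵐ[volume.restrict (Ioo (0:ℝ) Real.pi)] (fun θ : ℝ => θ⁻¹) := by
    filter_upwards [ae_restrict_mem measurableSet_Ioo] with θ hθ
    exact inv_nonneg.2 hθ.1.le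
  have hInt : IntegrableOn (fun θ : ℝ => θ⁻¹) (Ioo 0 Real.pi) :=
    ⟨measurable_inv.aestronglyMeasurable, (hasFiniteIntegral_iff_ofReal h0).2 hlt⟩
  have hInt' : IntegrableOn (fun θ : ℝ => θ ^ (-1:ℝ)) (Ioo 0 Real.pi) :=
    hInt.congr_fun (fun θ _ => (Real.rpow_neg_one θ).symm) measurableSet_Ioo
  have := (intervalIntegral.integrableOn_Ioo_rpow_iff Real.pi_pos).1 hInt'
  linarith

theorem stmt9 (p q : ℝ) (hp : 0 < p) (hpq : p < q)
    (ω : ℝ → ℝ) (hm : Measurable ω) (hnn : ∀ r, 0 ≤ ω r)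
    (hint : IntegrableOn ω (Set.Ico 0 1))
    (hnz : ¬ (∀ᵐ r ∂(volume.restrict (Set.Ico (0 : ℝ) 1)), ω r = 0)) :
    Tqp p q ω (fTest p q ω) < ⊤ ∧ Lqp p q ω (fTest p q ω) = ⊤ := by
  have hq : 0 < q := hp.trans hpq
  have ha0 : 0 < p / q := div_pos hp hq
  have ha1 : p / q < 1 := (div_lt_one hq).2 hpq
  constructor
  · -- Tent space norm is finite
    rw [Tqp]
    set B := ∫⁻ z in Metric.ball (0:ℂ) 1, ENNReal.ofReal (|Complex.arg z| ^ (-(p/q))) with hB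
    have hBlt : B < ⊤ := ball_lintegral_lt_top ha0 ha1
    have houter : ∫⁻ θ in Set.Ico (0 : ℝ) (2 * Real.pi),
        (∫⁻ z in cone 1 (Complex.exp ((θ : ℂ) * Complex.I)),
          ((‖fTest p q ω z‖₊ : ℝ≥0∞)) ^ p *
            ENNReal.ofReal (ω (‖z‖) / (1 - ‖z‖))) ^ (q / p)
        ≤ ∫⁻ _ in Set.Ico (0 : ℝ) (2 * Real.pi), B ^ (q / p) := by
      apply lintegral_mono
      intro θ
      apply ENNReal.rpow_le_rpow _ (div_nonneg hq.le hp.le)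
      calc ∫⁻ z in cone 1 (Complex.exp ((θ : ℂ) * Complex.I)),
            ((‖fTest p q ω z‖₊ : ℝ≥0∞)) ^ p *
              ENNReal.ofReal (ω (‖z‖) / (1 - ‖z‖))
          ≤ ∫⁻ z in cone 1 (Complex.exp ((θ : ℂ) * Complex.I)),
              ENNReal.ofReal (|Complex.arg z| ^ (-(p/q))) :=
            lintegral_mono fun z => tent_ptwise hp hq hnn z
        _ ≤ B := hB ▸ lintegral_mono_set (cone_subset_ball _)
    have hconst : ∫⁻ _ in Set.Ico (0 : ℝ) (2 * Real.pi), B ^ (q / p) < ⊤ := by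
      rw [setLIntegral_const, Real.volume_Ico]
      exact ENNReal.mul_lt_top
        (ENNReal.rpow_lt_top_of_nonneg (div_nonneg hq.le hp.le) hBlt.ne) ENNReal.ofReal_lt_top
    have hX : ENNReal.ofReal (1 / (2 * Real.pi)) *
        (∫⁻ θ in Set.Ico (0 : ℝ) (2 * Real.pi),
          (∫⁻ z in cone 1 (Complex.exp ((θ : ℂ) * Complex.I)),
            ((‖fTest p q ω z‖₊ : ℝ≥0∞)) ^ p *
              ENNReal.ofReal (ω (‖z‖) / (1 - ‖z‖))) ^ (q / p)) < ⊤ :=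
      ENNReal.mul_lt_top ENNReal.ofReal_lt_top (houter.trans_lt hconst)
    exact ENNReal.rpow_lt_top_of_nonneg (by positivity) hX.ne
  · -- Mixed norm is infinite
    rw [Lqp]
    set g : ℝ → ℝ≥0∞ := {r : ℝ | ω r ≠ 0}.indicator (fun r => ENNReal.ofReal ((1 - r) * r))
      with hg
    have hgmeas : Measurable g := by
      apply Measurable.indicator (by fun_prop)
      exact (hm (measurableSet_singleton 0)).compl
    set c : ℝ≥0∞ := ∫⁻ r in Ioo (0:ℝ) 1, g r with hc
    have hc_lt : c < ⊤ := by
      have hle : c ≤ ∫⁻ _ in Ioo (0:ℝ) 1, (1:ℝ≥0∞) := by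
        apply lintegral_mono
        intro r
        refine (indicator_le_self _ _ r).trans ?_
        exact ENNReal.ofReal_le_one.2 (by nlinarith [sq_nonneg (2*r - 1)])
      refine hle.trans_lt ?_
      rw [setLIntegral_const, one_mul, Real.volume_Ioo]
      exact ENNReal.ofReal_lt_top
    have hc_pos : 0 < c := by
      rw [pos_iff_ne_zero]
      intro hc0
      apply hnz
      have hz : g =ᵐ[volume.restrict (Ioo (0:ℝ) 1)] 0 :=
        (lintegral_eq_zero_iff hgmeas).1 hc0
      have hIcoIoo : volume.restrict (Ico (0:ℝ) 1) = volume.restrict (Ioo (0:ℝ) 1) :=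
        (Measure.restrict_congr_set (Ioo_ae_eq_Ico (μ := volume) (a := (0:ℝ)) (b := 1))).symm
      rw [hIcoIoo]
      filter_upwards [hz, ae_restrict_mem measurableSet_Ioo] with r hgr hr
      by_contra hωr
      have : g r = ENNReal.ofReal ((1 - r) * r) := indicator_of_mem (by exact hωr) _
      rw [this] at hgr
      have : (0:ℝ) < (1 - r) * r := mul_pos (by linarith [hr.2]) hr.1
      simp only [Pi.zero_apply] at hgr
      exact absurd hgr (ne_of_gt (ENNReal.ofReal_pos.2 this))
    have hinner : ∀ θ ∈ Ioo (0:ℝ) Real.pi,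
        (∫⁻ r in Set.Ico (0 : ℝ) 1,
          ((‖fTest p q ω ((r : ℂ) * Complex.exp ((θ : ℂ) * Complex.I))‖₊ : ℝ≥0∞)) ^ p *
            ENNReal.ofReal (ω r * r)) = ENNReal.ofReal (θ ^ (-(p/q))) * c := by
      intro θ hθ
      have hres : volume.restrict (Ico (0:ℝ) 1) = volume.restrict (Ioo (0:ℝ) 1) :=
        (Measure.restrict_congr_set (Ioo_ae_eq_Ico (μ := volume) (a := (0:ℝ)) (b := 1))).symm
      rw [show (∫⁻ r in Set.Ico (0 : ℝ) 1,
          ((‖fTest p q ω ((r : ℂ) * Complex.exp ((θ : ℂ) * Complex.I))‖₊ : ℝ≥0∞)) ^ p *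
            ENNReal.ofReal (ω r * r)) = ∫⁻ r in Set.Ioo (0 : ℝ) 1,
          ((‖fTest p q ω ((r : ℂ) * Complex.exp ((θ : ℂ) * Complex.I))‖₊ : ℝ≥0∞)) ^ p *
            ENNReal.ofReal (ω r * r) from by rw [hres]]
      have hptwise : ∀ r ∈ Ioo (0:ℝ) 1,
          ((‖fTest p q ω ((r : ℂ) * Complex.exp ((θ : ℂ) * Complex.I))‖₊ : ℝ≥0∞)) ^ p *
            ENNReal.ofReal (ω r * r) = ENNReal.ofReal (θ ^ (-(p/q))) * g r := by
        intro r hr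
        set z : ℂ := (r : ℂ) * Complex.exp ((θ : ℂ) * Complex.I) with hz
        have habs : ‖z‖ = r := by
          rw [hz, norm_mul, Complex.norm_real, Real.norm_eq_abs, Complex.norm_exp_ofReal_mul_I, mul_one,
            abs_of_pos hr.1]
        have harg : Complex.arg z = θ := by
          rw [hz, Complex.arg_real_mul _ hr.1, Complex.exp_mul_I,
            Complex.arg_cos_add_sin_mul_I ⟨by linarith [Real.pi_pos, hθ.1], hθ.2.le⟩]
        by_cases hω0 : ω r = 0
        · have hf0 : fTest p q ω z = 0 := by
            rw [fTest, if_pos (Or.inl (by rw [habs]; exact hω0))]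
          have hgr : g r = 0 := indicator_of_notMem (by simp [hω0]) _
          rw [hf0, hgr, mul_zero]
          simp [ENNReal.zero_rpow_of_pos hp]
        · have hωpos : 0 < ω r := (hnn r).lt_of_ne (Ne.symm hω0)
          have hn := nnnorm_fTest (p := p) (q := q) (ω := ω) (z := z)
            (by rw [habs]; exact hω0) (by rw [harg]; exact (ne_of_gt hθ.1))
            (by rw [habs]; linarith [hr.2]) (by rw [habs]; exact hnn r)
          rw [hn, habs, harg, abs_of_pos hθ.1]
          have hv : 0 ≤ (1 - r) ^ (1 / p) / (θ ^ (1 / q) * ω r ^ (1 / p)) := by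
            apply div_nonneg (Real.rpow_nonneg (by linarith [hr.2]) _)
            exact mul_nonneg (Real.rpow_nonneg hθ.1.le _) (Real.rpow_nonneg (hnn r) _)
          rw [ENNReal.ofReal_rpow_of_nonneg hv hp.le, ← ENNReal.ofReal_mul (by positivity)]
          have hkey := key_real (q := q) (t := 1 - r) (x := θ) (w := ω r) hp
            (by linarith [hr.2]) hθ.1 hωpos
          have hcalc : ((1 - r) ^ (1 / p) / (θ ^ (1 / q) * ω r ^ (1 / p))) ^ p * (ω r * r)
              = θ ^ (-(p/q)) * ((1 - r) * r) := by
            have : ((1 - r) ^ (1 / p) / (θ ^ (1 / q) * ω r ^ (1 / p))) ^ p * (ω r * r)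
                = (((1 - r) ^ (1 / p) / (θ ^ (1 / q) * ω r ^ (1 / p))) ^ p * ω r) * r := by ring
            rw [this, hkey]; ring
          rw [hcalc, ENNReal.ofReal_mul (Real.rpow_nonneg hθ.1.le _)]
          congr 1
          exact (indicator_of_mem (show r ∈ {r : ℝ | ω r ≠ 0} from hω0) (fun r => ENNReal.ofReal ((1 - r) * r))).symm
      rw [setLIntegral_congr_fun measurableSet_Ioo
        hptwise]
      rw [hc, lintegral_const_mul' _ _ ENNReal.ofReal_ne_top]
    -- outer integral diverges
    have hK_pos : 0 < c ^ (q/p) := ENNReal.rpow_pos hc_pos hc_lt.ne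
    have hK_lt : c ^ (q/p) < ⊤ :=
      ENNReal.rpow_lt_top_of_nonneg (div_nonneg hq.le hp.le) hc_lt.ne
    have hIoo_eq : ∫⁻ θ in Ioo (0:ℝ) Real.pi,
        (∫⁻ r in Set.Ico (0 : ℝ) 1,
          ((‖fTest p q ω ((r : ℂ) * Complex.exp ((θ : ℂ) * Complex.I))‖₊ : ℝ≥0∞)) ^ p *
            ENNReal.ofReal (ω r * r)) ^ (q / p) = ⊤ := by
      have hcongr : ∀ θ ∈ Ioo (0:ℝ) Real.pi,
          (∫⁻ r in Set.Ico (0 : ℝ) 1,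
            ((‖fTest p q ω ((r : ℂ) * Complex.exp ((θ : ℂ) * Complex.I))‖₊ : ℝ≥0∞)) ^ p *
              ENNReal.ofReal (ω r * r)) ^ (q / p)
          = ENNReal.ofReal θ⁻¹ * c ^ (q/p) := by
        intro θ hθ
        rw [hinner θ hθ, ENNReal.mul_rpow_of_nonneg _ _ (div_nonneg hq.le hp.le)]
        congr 1
        rw [ENNReal.ofReal_rpow_of_pos (Real.rpow_pos_of_pos hθ.1 _),
          ← Real.rpow_mul hθ.1.le]
        have : -(p/q) * (q/p) = -1 := by field_simp
        rw [this, Real.rpow_neg_one]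
      rw [setLIntegral_congr_fun measurableSet_Ioo hcongr,
        lintegral_mul_const' _ _ hK_lt.ne, inv_lintegral_top,
        ENNReal.top_mul hK_pos.ne']
    have hsub : Ioo (0:ℝ) Real.pi ⊆ Ico (0:ℝ) (2 * Real.pi) := fun θ hθ =>
      ⟨hθ.1.le, by linarith [Real.pi_pos, hθ.2]⟩
    have htop : ∫⁻ θ in Set.Ico (0 : ℝ) (2 * Real.pi),
        (∫⁻ r in Set.Ico (0 : ℝ) 1,
          ((‖fTest p q ω ((r : ℂ) * Complex.exp ((θ : ℂ) * Complex.I))‖₊ : ℝ≥0∞)) ^ p *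
            ENNReal.ofReal (ω r * r)) ^ (q / p) = ⊤ :=
      top_le_iff.1 (hIoo_eq ▸ lintegral_mono_set hsub)
    rw [htop, ENNReal.mul_top (by
      simp only [ne_eq, ENNReal.ofReal_eq_zero, not_le]
      positivity)]
    exact ENNReal.top_rpow_of_pos (by positivity)
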